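/- There is a constant C such that for every BNL-program Λ over a finite linearly ordered set T of schema variables, of size s and depth d, there exist a finite linearly ordered set T' with T ⊆ T' and a fully-open BNL-program Λ' over T' such that Λ' is asynchronously equivalent to Λ, the size of Λ' is at most C·s·(d+1), and the computation delay of Λ' relative to Λ is at most C·(d+1). -/

import Mathlib

/-! ### Boolean network logic (BNL) -/

/-- Formulas of Boolean network logic (BNL), over schema variables indexed by `ℕ`. -/
inductive BForm where
  | tru : BForm
  | var : ℕ → BForm
  | not : BForm → BForm
  | and : BForm → BForm → BForm

namespace BForm

/-- Truth value of a BNL-formula under a valuation of the schema variables. -/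
def eval (g : ℕ → Bool) : BForm → Bool
  | tru => true
  | var x => g x
  | not φ => !(eval g φ)
  | and φ ψ => eval g φ && eval g ψ

/-- Number of occurrences of `⊤`, variables, `¬` and `∧`. -/
def size : BForm → ℕ
  | tru => 1
  | var _ => 1
  | not φ => size φ + 1
  | and φ ψ => size φ + size ψ + 1

/-- Connective-nesting depth. -/
def depth : BForm → ℕ
  | tru => 0
  | var _ => 0
  | not φ => depth φ + 1
  | and φ ψ => max (depth φ) (depth ψ) + 1

/-- The set of schema variables occurring in a formula. -/
def vars : BForm → Finset ℕ
  | tru => ∅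
  | var x => {x}
  | not φ => vars φ
  | and φ ψ => vars φ ∪ vars ψ

end BForm

/-- A BNL-program over the finite set `T` of schema variables (linearly ordered as natural
numbers), with input predicates `I`, terminal values `term` (relevant on `T \ I`), iteration
clause bodies `iter` (relevant on `T`), print predicates `Pr` and attention predicates `At`. -/
structure BNL where
  T : Finset ℕ
  I : Finset ℕ
  hIT : I ⊆ T
  term : ℕ → Bool
  iter : ℕ → BForm
  hiter : ∀ X ∈ T, (iter X).vars ⊆ T
  Pr : Finset ℕ
  hPr : Pr ⊆ T
  At : Finset ℕ
  hAt : At ⊆ T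

/-- The valuation of the elements of a finite set `I ⊆ ℕ` induced by the bit string `u`,
via the increasing enumeration of `I`. -/
def inputVal (I : Finset ℕ) (u : ℕ → Bool) (X : ℕ) : Bool :=
  u ((I.sort (· ≤ ·)).idxOf X)

namespace BNL

/-- The global configuration of a BNL-program at round `t` on input bit string `u`. -/
def conf (Λ : BNL) (u : ℕ → Bool) : ℕ → ℕ → Bool
  | 0 => fun X => if X ∈ Λ.I then inputVal Λ.I u X else Λ.term X
  | t + 1 => fun X => (Λ.iter X).eval (Λ.conf u t)

/-- The global configuration string at round `t`: the values on `T` in increasing order. -/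
def confStr (Λ : BNL) (u : ℕ → Bool) (t : ℕ) : List Bool :=
  (Λ.T.sort (· ≤ ·)).map (Λ.conf u t)

/-- Round `t` is an output round iff some attention predicate is true at round `t`. -/
def attn (Λ : BNL) (u : ℕ → Bool) (t : ℕ) : Prop :=
  ∃ X ∈ Λ.At, Λ.conf u t X = true

/-- The print string at round `t`: the values of the print predicates in increasing order. -/
def out (Λ : BNL) (u : ℕ → Bool) (t : ℕ) : List Bool :=
  (Λ.Pr.sort (· ≤ ·)).map (Λ.conf u t)

/-- The size of a BNL-program: the total number of occurrences of `⊤`, variables, `¬`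
and `∧` in its terminal and iteration clauses. -/
def size (Λ : BNL) : ℕ :=
  (Λ.T \ Λ.I).card + ∑ X ∈ Λ.T, (Λ.iter X).size

/-- The depth of a BNL-program: the maximum depth of the bodies of its iteration clauses. -/
def depth (Λ : BNL) : ℕ :=
  Λ.T.sup fun X => (Λ.iter X).depth

/-- Pointwise transient time: the least `t` such that `g_t = g_{t+c}` on `T` for some `c ≥ 1`. -/
noncomputable def transientAt (Λ : BNL) (u : ℕ → Bool) : ℕ :=
  sInf {t | ∃ c, 1 ≤ c ∧ ∀ X ∈ Λ.T, Λ.conf u (t + c) X = Λ.conf u t X}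

/-- The transient time of a program: the maximum of its pointwise transient times. -/
def HasTransientTime (Λ : BNL) (n : ℕ) : Prop :=
  (∀ u, Λ.transientAt u ≤ n) ∧ ∃ u, Λ.transientAt u = n

end BNL

/-- An abstract machine producing, for each input bit string, a global configuration string,
an attention condition, and a print string at every round. -/
structure Machine where
  ins : ℕ
  prints : ℕ
  conf : (ℕ → Bool) → ℕ → List Bool
  attn : (ℕ → Bool) → ℕ → Prop
  out : (ℕ → Bool) → ℕ → List Bool

/-- The output rounds of a machine on a given input, as an ordered subtype of `ℕ`. -/
abbrev Machine.Rounds (M : Machine) (u : ℕ → Bool) := {t : ℕ // M.attn u t}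

/-- The machine determined by a BNL-program. -/
def BNL.toM (Λ : BNL) : Machine :=
  ⟨Λ.I.card, Λ.Pr.card, Λ.confStr, Λ.attn, Λ.out⟩

/-- Asynchronous equivalence: equally many input and print positions and, on every input,
an order isomorphism between the output rounds under which the outputs agree. -/
def AsyncEquiv (M₁ M₂ : Machine) : Prop :=
  M₁.ins = M₂.ins ∧ M₁.prints = M₂.prints ∧
  ∀ u : ℕ → Bool, ∃ e : M₁.Rounds u ≃o M₂.Rounds u,
    ∀ t : M₁.Rounds u, M₁.out u t.val = M₂.out u (e t).val

/-- Global equivalence: asynchronous equivalence together with identical global configuration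
sequences and identical output rounds on every input. -/
def GlobalEquiv (M₁ M₂ : Machine) : Prop :=
  AsyncEquiv M₁ M₂ ∧ ∀ u t, M₁.conf u t = M₂.conf u t ∧ (M₁.attn u t ↔ M₂.attn u t)

/-- `M₁` is asynchronously equivalent to `M₂` with computation delay at most `D`:
matched output rounds `x` of `M₁` and `y` of `M₂` satisfy `y ≤ x` and `x ≤ D·y`. -/
def EquivWithDelay (M₁ M₂ : Machine) (D : ℕ) : Prop :=
  M₁.ins = M₂.ins ∧ M₁.prints = M₂.prints ∧
  ∀ u : ℕ → Bool, ∃ e : M₁.Rounds u ≃o M₂.Rounds u,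
    (∀ t : M₁.Rounds u, M₁.out u t.val = M₂.out u (e t).val) ∧
    ∀ t : M₁.Rounds u, (e t).val ≤ t.val ∧ t.val ≤ D * (e t).val

/-- A formula is open: of one of the forms `⊤`, `Y`, `¬Y`, `Y ∧ Z` for variables `Y`, `Z`. -/
def BForm.isOpen : BForm → Prop
  | .tru => True
  | .var _ => True
  | .not (.var _) => True
  | .and (.var _) (.var _) => True
  | _ => False

/-- A BNL-program is fully-open if the body of every iteration clause is open. -/
def BNL.FullyOpen (Λ : BNL) : Prop :=
  ∀ X ∈ Λ.T, (Λ.iter X).isOpen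

namespace BNLfo
open BForm

lemma bsize_pos (φ : BForm) : 1 ≤ φ.size := by
  cases φ <;> simp [BForm.size]

/-- Lookup in an association list with nodup keys. -/
lemma lookup_eq_some {l : List (ℕ × BForm)} (h : (l.map Prod.fst).Nodup)
    {k : ℕ} {cl : BForm} (hm : (k, cl) ∈ l) : l.lookup k = some cl := by
  induction l with
  | nil => cases hm
  | cons a tl ih =>
    obtain ⟨a1, a2⟩ := a
    simp only [List.map_cons, List.nodup_cons] at h
    rcases List.mem_cons.1 hm with heq | htl
    · cases heq; simp [List.lookup]
    · have hne : k ≠ a1 := by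
        rintro rfl
        exact h.1 (by simpa using List.mem_map_of_mem (f := Prod.fst) htl)
      have : (k == a1) = false := beq_false_of_ne hne
      simp [List.lookup, this, ih h.2 htl]

/-- `x` is a descendant of `k` in heap numbering. -/
def Desc (k x : ℕ) : Prop := ∃ ρ : ℕ, k * 2 ^ ρ ≤ x ∧ x < (k + 1) * 2 ^ ρ

lemma desc_self (k : ℕ) : Desc k k := ⟨0, by simp⟩

lemma desc_left {k x : ℕ} (h : Desc (2 * k) x) : Desc k x := by
  obtain ⟨ρ, h1, h2⟩ := h
  exact ⟨ρ + 1, by rw [pow_succ]; nlinarith, by rw [pow_succ]; nlinarith⟩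

lemma desc_right {k x : ℕ} (h : Desc (2 * k + 1) x) : Desc k x := by
  obtain ⟨ρ, h1, h2⟩ := h
  exact ⟨ρ + 1, by rw [pow_succ]; nlinarith, by rw [pow_succ]; nlinarith⟩

lemma desc_ge {k x : ℕ} (hk : 1 ≤ k) (h : Desc k x) : k ≤ x := by
  obtain ⟨ρ, h1, _⟩ := h
  have : k * 1 ≤ k * 2 ^ ρ := Nat.mul_le_mul_left k (Nat.one_le_two_pow)
  omega

lemma desc_disj {k x : ℕ} (hk : 1 ≤ k) (h1 : Desc (2 * k) x) (h2 : Desc (2 * k + 1) x) :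
    False := by
  obtain ⟨ρ, ha, hb⟩ := h1
  obtain ⟨σ, hc, hd⟩ := h2
  have hρσ : σ < ρ := by
    by_contra h
    push_neg at h
    have : (2 : ℕ) ^ ρ ≤ 2 ^ σ := Nat.pow_le_pow_right (by norm_num) h
    nlinarith
  have hss : (2 : ℕ) ^ (σ + 1) ≤ 2 ^ ρ := Nat.pow_le_pow_right (by norm_num) hρσ
  have : (2 * k) * 2 ^ (σ + 1) ≤ x := le_trans (Nat.mul_le_mul_left _ hss) ha
  rw [pow_succ] at this
  nlinarith


section Construction
variable (Λ : BNL)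

/-- A strict upper bound for the original variables. -/
def N : ℕ := Λ.T.sup id + 1
/-- Period length. -/
def L : ℕ := Λ.depth + 2
/-- The constant-true variable. -/
def ttV : ℕ := N Λ
/-- Clock variables, `i < L`. -/
def cV (i : ℕ) : ℕ := N Λ + 1 + i
/-- Start of the delay-chain region. -/
def P0 : ℕ := N Λ + 1 + L Λ
/-- Delay chain: `pV Y j` holds the value of `Y` delayed by `j` rounds. -/
def pV (Y j : ℕ) : ℕ := if j = 0 then Y else P0 Λ + L Λ * Y + j
/-- Width of each gate block. -/
def W : ℕ := 2 ^ (Λ.depth + 1)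
/-- Start of the gate region. -/
def G0 : ℕ := P0 Λ + L Λ * N Λ
/-- Gate variable for heap position `k` in the circuit of `X`. -/
def gV (X k : ℕ) : ℕ := G0 Λ + W Λ * X + k

/-- The variable supplying the value of subformula `φ` at depth `δ`, heap position `k`. -/
def ref (X δ k : ℕ) : BForm → ℕ
  | .tru => ttV Λ
  | .var Y => pV Λ Y (L Λ - 1 - δ)
  | .not _ => gV Λ X k
  | .and _ _ => gV Λ X k

/-- The gate clauses compiling formula `φ` at heap position `k`, depth `δ`, for head `X`. -/
def gcl (X : ℕ) : ℕ → ℕ → BForm → List (ℕ × BForm)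
  | _, _, .tru => []
  | _, _, .var _ => []
  | k, δ, .not φ => (k, .not (.var (ref Λ X (δ + 1) (2 * k) φ))) :: gcl X (2 * k) (δ + 1) φ
  | k, δ, .and φ ψ =>
      (k, .and (.var (ref Λ X (δ + 1) (2 * k) φ)) (.var (ref Λ X (δ + 1) (2 * k + 1) ψ))) ::
        (gcl X (2 * k) (δ + 1) φ ++ gcl X (2 * k + 1) (δ + 1) ψ)

/-- Iteration clauses of the fully-open program. -/
def iter' (n : ℕ) : BForm :=
  if n ∈ Λ.T then .and (.var (ref Λ n 0 1 (Λ.iter n))) (.var (cV Λ (L Λ - 1)))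
  else if n = ttV Λ then .tru
  else if n < P0 Λ then
    .var (cV Λ (if n - (N Λ + 1) = 0 then L Λ - 1 else n - (N Λ + 1) - 1))
  else if n < G0 Λ then
    (if (n - P0 Λ) % L Λ = 0 then .var n
     else .var (pV Λ ((n - P0 Λ) / L Λ) ((n - P0 Λ) % L Λ - 1)))
  else
    ((gcl Λ ((n - G0 Λ) / W Λ) 1 0 (Λ.iter ((n - G0 Λ) / W Λ))).lookup
      ((n - G0 Λ) % W Λ)).getD (.var n)

/-- Terminal values of the fully-open program. -/
def term' (n : ℕ) : Bool :=
  if n ∈ Λ.T then Λ.term n else decide (n = ttV Λ ∨ n = cV Λ 0)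

/-- Schema variables of the fully-open program. -/
def T' : Finset ℕ :=
  Λ.T ∪ {ttV Λ} ∪ (Finset.range (L Λ)).image (cV Λ)
    ∪ (Λ.T ×ˢ Finset.Ico 1 (L Λ)).image (fun p => P0 Λ + L Λ * p.1 + p.2)
    ∪ Λ.T.biUnion (fun X => ((gcl Λ X 1 0 (Λ.iter X)).map Prod.fst).toFinset.image (gV Λ X))

lemma hL2 : 2 ≤ L Λ := by simp [L]

lemma lt_N {X : ℕ} (hX : X ∈ Λ.T) : X < N Λ :=
  Nat.lt_succ_of_le (Finset.le_sup (f := id) hX)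

lemma notin_T {n : ℕ} (hn : N Λ ≤ n) : n ∉ Λ.T := fun h => absurd (lt_N Λ h) (by omega)

lemma depth_le {X : ℕ} (hX : X ∈ Λ.T) : (Λ.iter X).depth ≤ Λ.depth :=
  Finset.le_sup (f := fun X => (Λ.iter X).depth) hX

end Construction


section Decode
variable (Λ : BNL)

lemma W_pos : 0 < W Λ := Nat.pow_pos (by norm_num)

lemma dec_T {X : ℕ} (hX : X ∈ Λ.T) :
    iter' Λ X = .and (.var (ref Λ X 0 1 (Λ.iter X))) (.var (cV Λ (L Λ - 1))) := by
  simp [iter', hX]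

lemma dec_tt : iter' Λ (ttV Λ) = .tru := by
  have h1 : ttV Λ ∉ Λ.T := notin_T Λ (le_refl _)
  rw [iter', if_neg h1, if_pos rfl]

lemma dec_c {i : ℕ} (hi : i < L Λ) :
    iter' Λ (cV Λ i) = .var (cV Λ (if i = 0 then L Λ - 1 else i - 1)) := by
  have h1 : cV Λ i ∉ Λ.T := notin_T Λ (by unfold cV; omega)
  have h2 : cV Λ i ≠ ttV Λ := by unfold cV ttV; omega
  have h3 : cV Λ i < P0 Λ := by unfold cV P0; omega
  rw [iter', if_neg h1, if_neg h2, if_pos h3]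
  have h4 : cV Λ i - (N Λ + 1) = i := by unfold cV; omega
  rw [h4]

lemma dec_p {X j : ℕ} (hX : X ∈ Λ.T) (hj1 : 1 ≤ j) (hj2 : j < L Λ) :
    iter' Λ (P0 Λ + L Λ * X + j) = .var (pV Λ X (j - 1)) := by
  have hXN : X < N Λ := lt_N Λ hX
  have hNP : N Λ + 1 ≤ P0 Λ := by unfold P0; omega
  have h1 : P0 Λ + L Λ * X + j ∉ Λ.T := notin_T Λ (by omega)
  have h2 : P0 Λ + L Λ * X + j ≠ ttV Λ := by unfold ttV; omega
  have h3 : ¬ (P0 Λ + L Λ * X + j < P0 Λ) := by omega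
  have h4 : P0 Λ + L Λ * X + j < G0 Λ := by
    have h5 : L Λ * (X + 1) ≤ L Λ * N Λ := Nat.mul_le_mul_left _ (by omega)
    have h6 : L Λ * (X + 1) = L Λ * X + L Λ := by ring
    unfold G0; omega
  have hsub : P0 Λ + L Λ * X + j - P0 Λ = L Λ * X + j := by omega
  have hdiv : (L Λ * X + j) / L Λ = X := by
    rw [Nat.mul_add_div (by omega), Nat.div_eq_of_lt hj2]; omega
  have hmod : (L Λ * X + j) % L Λ = j := by
    rw [Nat.mul_add_mod]; exact Nat.mod_eq_of_lt hj2
  rw [iter', if_neg h1, if_neg h2, if_neg h3, if_pos h4, hsub, hdiv, hmod, if_neg (by omega)]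

lemma dec_g {X k : ℕ} (hX : X ∈ Λ.T) (hk1 : 1 ≤ k) (hk2 : k < W Λ) :
    iter' Λ (gV Λ X k) =
      ((gcl Λ X 1 0 (Λ.iter X)).lookup k).getD (.var (gV Λ X k)) := by
  have hXN : X < N Λ := lt_N Λ hX
  have hNP : N Λ + 1 ≤ P0 Λ := by unfold P0; omega
  have hPG : P0 Λ ≤ G0 Λ := by unfold G0; omega
  have h1 : gV Λ X k ∉ Λ.T := notin_T Λ (by unfold gV; omega)
  have h2 : gV Λ X k ≠ ttV Λ := by unfold gV ttV; omega
  have h3 : ¬ (gV Λ X k < P0 Λ) := by unfold gV; omega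
  have h4 : ¬ (gV Λ X k < G0 Λ) := by unfold gV; omega
  have hsub : gV Λ X k - G0 Λ = W Λ * X + k := by unfold gV; omega
  have hdiv : (W Λ * X + k) / W Λ = X := by
    rw [Nat.mul_add_div (W_pos Λ), Nat.div_eq_of_lt hk2]; omega
  have hmod : (W Λ * X + k) % W Λ = k := by
    rw [Nat.mul_add_mod]; exact Nat.mod_eq_of_lt hk2
  rw [iter', if_neg h1, if_neg h2, if_neg h3, if_neg h4, hsub, hdiv, hmod]

end Decode

section Gcl
variable (Λ : BNL)

lemma gcl_len (X : ℕ) : ∀ (φ : BForm) (k δ : ℕ), (gcl Λ X k δ φ).length ≤ φ.size := by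
  intro φ
  induction φ with
  | tru => intro k δ; simp [gcl, BForm.size]
  | var Y => intro k δ; simp [gcl, BForm.size]
  | not φ ih => intro k δ; simp only [gcl, List.length_cons, BForm.size]
                exact Nat.add_le_add_right (ih _ _) 1
  | and φ ψ ihφ ihψ =>
      intro k δ
      simp only [gcl, List.length_cons, List.length_append, BForm.size]
      have := ihφ (2 * k) (δ + 1)
      have := ihψ (2 * k + 1) (δ + 1)
      omega

lemma gcl_keys (X : ℕ) : ∀ (φ : BForm) (k δ : ℕ), 1 ≤ k →
    ((gcl Λ X k δ φ).map Prod.fst).Nodup ∧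
      ∀ x ∈ (gcl Λ X k δ φ).map Prod.fst, Desc k x := by
  intro φ
  induction φ with
  | tru => intro k δ hk; simp [gcl]
  | var Y => intro k δ hk; simp [gcl]
  | not φ ih =>
    intro k δ hk
    obtain ⟨h1, h2⟩ := ih (2 * k) (δ + 1) (by omega)
    constructor
    · simp only [gcl, List.map_cons, List.nodup_cons]
      refine ⟨fun hx => ?_, h1⟩
      have := desc_ge (by omega) (h2 _ hx)
      omega
    · intro x hx
      simp only [gcl, List.map_cons, List.mem_cons] at hx
      rcases hx with rfl | hx
      · exact desc_self _
      · exact desc_left (h2 _ hx)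
  | and φ ψ ihφ ihψ =>
    intro k δ hk
    obtain ⟨h1, h2⟩ := ihφ (2 * k) (δ + 1) (by omega)
    obtain ⟨h3, h4⟩ := ihψ (2 * k + 1) (δ + 1) (by omega)
    constructor
    · simp only [gcl, List.map_cons, List.map_append, List.nodup_cons, List.nodup_append]
      refine ⟨fun hx => ?_, h1, h3, ?_⟩
      · rcases List.mem_append.1 hx with hx | hx
        · have := desc_ge (by omega) (h2 _ hx); omega
        · have := desc_ge (by omega) (h4 _ hx); omega
      · intro a ha b hb hab
        subst hab
        exact desc_disj hk (h2 _ ha) (h4 _ hb)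
    · intro x hx
      simp only [gcl, List.map_cons, List.map_append, List.mem_cons, List.mem_append] at hx
      rcases hx with rfl | hx | hx
      · exact desc_self _
      · exact desc_left (h2 _ hx)
      · exact desc_right (h4 _ hx)

/-- Membership lemmas for `T'`. -/
lemma T_sub_T' : Λ.T ⊆ T' Λ := by
  intro x hx
  simp only [T', Finset.mem_union]
  exact Or.inl (Or.inl (Or.inl (Or.inl hx)))

lemma tt_mem_T' : ttV Λ ∈ T' Λ := by
  simp only [T', Finset.mem_union]
  exact Or.inl (Or.inl (Or.inl (Or.inr (Finset.mem_singleton_self _))))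

lemma c_mem_T' {i : ℕ} (hi : i < L Λ) : cV Λ i ∈ T' Λ := by
  simp only [T', Finset.mem_union]
  exact Or.inl (Or.inl (Or.inr (Finset.mem_image.2 ⟨i, Finset.mem_range.2 hi, rfl⟩)))

lemma p_mem_T' {Y j : ℕ} (hY : Y ∈ Λ.T) (hj1 : 1 ≤ j) (hj2 : j < L Λ) :
    P0 Λ + L Λ * Y + j ∈ T' Λ := by
  simp only [T', Finset.mem_union]
  exact Or.inl (Or.inr (Finset.mem_image.2
    ⟨(Y, j), Finset.mem_product.2 ⟨hY, Finset.mem_Ico.2 ⟨hj1, hj2⟩⟩, rfl⟩))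

lemma pV_mem_T' {Y j : ℕ} (hY : Y ∈ Λ.T) (hj : j < L Λ) : pV Λ Y j ∈ T' Λ := by
  rcases Nat.eq_zero_or_pos j with rfl | hj1
  · simpa [pV] using T_sub_T' Λ hY
  · rw [pV, if_neg (by omega)]
    exact p_mem_T' Λ hY hj1 hj

lemma gV_mem_T' {X : ℕ} (hX : X ∈ Λ.T) {p : ℕ × BForm}
    (hp : p ∈ gcl Λ X 1 0 (Λ.iter X)) : gV Λ X p.1 ∈ T' Λ := by
  simp only [T', Finset.mem_union]
  refine Or.inr (Finset.mem_biUnion.2 ⟨X, hX, Finset.mem_image.2 ⟨p.1, ?_, rfl⟩⟩)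
  exact List.mem_toFinset.2 (List.mem_map_of_mem (f := Prod.fst) hp)

/-- A connective formula contributes its own key. -/
lemma gcl_self_key {φ : BForm}
    (hφ : (∃ a, φ = BForm.not a) ∨ ∃ a b, φ = BForm.and a b) (X k δ : ℕ) :
    ∃ cl, (k, cl) ∈ gcl Λ X k δ φ := by
  rcases hφ with ⟨a, rfl⟩ | ⟨a, b, rfl⟩
  · exact ⟨_, List.mem_cons_self⟩
  · exact ⟨_, List.mem_cons_self⟩

lemma ref_mem_T' {X : ℕ} (hX : X ∈ Λ.T) {φ : BForm} {δ k : ℕ}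
    (hv : φ.vars ⊆ Λ.T)
    (hcon : ((∃ a, φ = BForm.not a) ∨ ∃ a b, φ = BForm.and a b) →
      ∃ cl, (k, cl) ∈ gcl Λ X 1 0 (Λ.iter X)) :
    ref Λ X δ k φ ∈ T' Λ := by
  cases φ with
  | tru => exact tt_mem_T' Λ
  | var Y =>
      refine pV_mem_T' Λ (hv (by simp [BForm.vars])) ?_
      have := hL2 Λ; omega
  | not a =>
      obtain ⟨cl, hcl⟩ := hcon (Or.inl ⟨a, rfl⟩)
      exact gV_mem_T' Λ hX (p := (k, cl)) hcl
  | and a b =>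
      obtain ⟨cl, hcl⟩ := hcon (Or.inr ⟨a, b, rfl⟩)
      exact gV_mem_T' Λ hX (p := (k, cl)) hcl

/-- Properties of all gate clauses. -/
lemma gcl_props {X : ℕ} (hX : X ∈ Λ.T) :
    ∀ (φ : BForm) (k δ : ℕ), 1 ≤ k → k < 2 ^ (δ + 1) → φ.vars ⊆ Λ.T →
      δ + φ.depth ≤ Λ.depth →
      (∀ p ∈ gcl Λ X k δ φ, p ∈ gcl Λ X 1 0 (Λ.iter X)) →
      ∀ p ∈ gcl Λ X k δ φ,
        (1 ≤ p.1 ∧ p.1 < W Λ) ∧ p.2.size ≤ 3 ∧ p.2.isOpen ∧ p.2.vars ⊆ T' Λ := by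
  intro φ
  induction φ with
  | tru => intro k δ _ _ _ _ _ p hp; simp [gcl] at hp
  | var Y => intro k δ _ _ _ _ _ p hp; simp [gcl] at hp
  | not φ ih =>
    intro k δ hk1 hk2 hv hδ hsub p hp
    have hδ' : δ + 1 + φ.depth ≤ Λ.depth := by
      simp only [BForm.depth] at hδ; omega
    rcases List.mem_cons.1 hp with rfl | hp
    · refine ⟨⟨hk1, lt_of_lt_of_le hk2 (Nat.pow_le_pow_right (by norm_num) (by omega))⟩,
        ?_, ?_, ?_⟩
      · simp [BForm.size]
      · simp [BForm.isOpen]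
      · simp only [BForm.vars, Finset.singleton_subset_iff]
        refine ref_mem_T' Λ hX (by simpa [BForm.vars] using hv) (fun hcon => ?_)
        obtain ⟨cl, hcl⟩ := gcl_self_key Λ hcon X (2 * k) (δ + 1)
        exact ⟨cl, hsub _ (List.mem_cons_of_mem _ hcl)⟩
    · exact ih (2 * k) (δ + 1) (by omega) (by rw [pow_succ]; omega)
        (by simpa [BForm.vars] using hv) hδ'
        (fun q hq => hsub _ (List.mem_cons_of_mem _ hq)) p hp
  | and φ ψ ihφ ihψ =>
    intro k δ hk1 hk2 hv hδ hsub p hp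
    have hvφ : φ.vars ⊆ Λ.T := fun x hx => hv (by simp [BForm.vars]; exact Or.inl hx)
    have hvψ : ψ.vars ⊆ Λ.T := fun x hx => hv (by simp [BForm.vars]; exact Or.inr hx)
    have hδφ : δ + 1 + φ.depth ≤ Λ.depth := by
      simp only [BForm.depth] at hδ; omega
    have hδψ : δ + 1 + ψ.depth ≤ Λ.depth := by
      simp only [BForm.depth] at hδ; omega
    rcases List.mem_cons.1 hp with rfl | hp
    · refine ⟨⟨hk1, lt_of_lt_of_le hk2 (Nat.pow_le_pow_right (by norm_num) (by omega))⟩,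
        ?_, ?_, ?_⟩
      · simp [BForm.size]
      · simp [BForm.isOpen]
      · simp only [BForm.vars, Finset.union_subset_iff, Finset.singleton_subset_iff]
        constructor
        · refine ref_mem_T' Λ hX hvφ (fun hcon => ?_)
          obtain ⟨cl, hcl⟩ := gcl_self_key Λ hcon X (2 * k) (δ + 1)
          exact ⟨cl, hsub _ (List.mem_cons_of_mem _ (List.mem_append_left _ hcl))⟩
        · refine ref_mem_T' Λ hX hvψ (fun hcon => ?_)
          obtain ⟨cl, hcl⟩ := gcl_self_key Λ hcon X (2 * k + 1) (δ + 1)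
          exact ⟨cl, hsub _ (List.mem_cons_of_mem _ (List.mem_append_right _ hcl))⟩
    · rcases List.mem_append.1 hp with hp | hp
      · exact ihφ (2 * k) (δ + 1) (by omega) (by rw [pow_succ]; omega) hvφ hδφ
          (fun q hq => hsub _ (List.mem_cons_of_mem _ (List.mem_append_left _ hq))) p hp
      · exact ihψ (2 * k + 1) (δ + 1) (by omega) (by rw [pow_succ]; omega) hvψ hδψ
          (fun q hq => hsub _ (List.mem_cons_of_mem _ (List.mem_append_right _ hq))) p hp

end Gcl

section Prog
variable (Λ : BNL)

lemma iter_props {n : ℕ} (hn : n ∈ T' Λ) :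
    (iter' Λ n).size ≤ 3 ∧ (iter' Λ n).isOpen ∧ (iter' Λ n).vars ⊆ T' Λ := by
  have hL := hL2 Λ
  simp only [T', Finset.mem_union] at hn
  rcases hn with ((((hn | hn) | hn) | hn) | hn)
  · rw [dec_T Λ hn]
    refine ⟨by simp [BForm.size], by simp [BForm.isOpen], ?_⟩
    simp only [BForm.vars, Finset.union_subset_iff, Finset.singleton_subset_iff]
    exact ⟨ref_mem_T' Λ hn (Λ.hiter n hn) (fun hcon => gcl_self_key Λ hcon n 1 0),
      c_mem_T' Λ (by omega)⟩
  · rw [Finset.mem_singleton.1 hn, dec_tt]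
    exact ⟨by simp [BForm.size], by simp [BForm.isOpen], by simp [BForm.vars]⟩
  · obtain ⟨i, hi, rfl⟩ := Finset.mem_image.1 hn
    have hiL := Finset.mem_range.1 hi
    rw [dec_c Λ hiL]
    refine ⟨by simp [BForm.size], by simp [BForm.isOpen], ?_⟩
    simp only [BForm.vars, Finset.singleton_subset_iff]
    refine c_mem_T' Λ ?_
    split <;> omega
  · obtain ⟨⟨Y, j⟩, hmem, rfl⟩ := Finset.mem_image.1 hn
    obtain ⟨hY, hj⟩ := Finset.mem_product.1 hmem
    obtain ⟨hj1, hj2⟩ := Finset.mem_Ico.1 hj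
    rw [dec_p Λ hY hj1 hj2]
    refine ⟨by simp [BForm.size], by simp [BForm.isOpen], ?_⟩
    simp only [BForm.vars, Finset.singleton_subset_iff]
    exact pV_mem_T' Λ hY (by omega)
  · obtain ⟨X, hX, hn⟩ := Finset.mem_biUnion.1 hn
    obtain ⟨k, hk, rfl⟩ := Finset.mem_image.1 hn
    obtain ⟨⟨k', cl⟩, hp, hkk⟩ := List.mem_map.1 (List.mem_toFinset.1 hk)
    simp only at hkk
    subst hkk
    have hprops := gcl_props Λ hX (Λ.iter X) 1 0 le_rfl (by norm_num) (Λ.hiter X hX)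
      (by simpa using depth_le Λ hX) (fun q hq => hq) _ hp
    obtain ⟨⟨hk1, hk2⟩, hsz, hop, hv⟩ := hprops
    rw [dec_g Λ hX hk1 hk2, lookup_eq_some (gcl_keys Λ X (Λ.iter X) 1 0 le_rfl).1 hp,
      Option.getD_some]
    exact ⟨hsz, hop, hv⟩

/-- The fully-open program. -/
def Lam' : BNL where
  T := T' Λ
  I := Λ.I
  hIT := Λ.hIT.trans (T_sub_T' Λ)
  term := term' Λ
  iter := iter' Λ
  hiter := fun X hX => (iter_props Λ hX).2.2
  Pr := Λ.Pr
  hPr := Λ.hPr.trans (T_sub_T' Λ)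
  At := Λ.At
  hAt := Λ.hAt.trans (T_sub_T' Λ)

lemma Lam'_fullyOpen : (Lam' Λ).FullyOpen := fun _ hX => (iter_props Λ hX).2.1

end Prog

section Dyn
variable (Λ : BNL) (u : ℕ → Bool)

lemma confS (r n : ℕ) :
    (Lam' Λ).conf u (r + 1) n = (iter' Λ n).eval ((Lam' Λ).conf u r) := rfl

lemma conf0 (n : ℕ) :
    (Lam' Λ).conf u 0 n = if n ∈ Λ.I then inputVal Λ.I u n else term' Λ n := rfl

lemma notin_I {n : ℕ} (hn : N Λ ≤ n) : n ∉ Λ.I := fun h => notin_T Λ hn (Λ.hIT h)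

lemma tt_true : ∀ r, (Lam' Λ).conf u r (ttV Λ) = true := by
  intro r
  cases r with
  | zero =>
    have h1 : ttV Λ ∉ Λ.I := notin_I Λ (Nat.le_of_eq rfl)
    rw [conf0, if_neg h1]
    simp [term', ttV, notin_T Λ (le_refl (N Λ))]
  | succ r => rw [confS, dec_tt]; rfl

lemma succ_mod (r : ℕ) :
    (r + 1) % L Λ = if r % L Λ + 1 = L Λ then 0 else r % L Λ + 1 := by
  have hL := hL2 Λ
  have h1 : (r + 1) % L Λ = (r % L Λ + 1 % L Λ) % L Λ := Nat.add_mod r 1 (L Λ)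
  rw [Nat.mod_eq_of_lt (by omega : 1 < L Λ)] at h1
  have hlt : r % L Λ < L Λ := Nat.mod_lt _ (by omega)
  split
  · rename_i h; rw [h1, h, Nat.mod_self]
  · rename_i h; rw [h1, Nat.mod_eq_of_lt (by omega)]

lemma clock : ∀ r {i : ℕ}, i < L Λ → (Lam' Λ).conf u r (cV Λ i) = decide (r % L Λ = i) := by
  intro r
  induction r with
  | zero =>
    intro i hi
    have hN : N Λ ≤ cV Λ i := by unfold cV; omega
    rw [conf0, if_neg (notin_I Λ hN)]
    have h0 : (0 : ℕ) % L Λ = 0 := Nat.zero_mod _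
    rw [h0]
    simp only [term', if_neg (notin_T Λ hN)]
    have h1 : cV Λ i ≠ ttV Λ := by unfold cV ttV; omega
    have h2 : (cV Λ i = cV Λ 0) ↔ i = 0 := by unfold cV; omega
    by_cases h : i = 0 <;> simp [h1, h2, h, eq_comm]
  | succ r ih =>
    intro i hi
    have hL := hL2 Λ
    rw [confS, dec_c Λ hi]
    have hi' : (if i = 0 then L Λ - 1 else i - 1) < L Λ := by split <;> omega
    show (Lam' Λ).conf u r (cV Λ _) = _
    rw [ih hi']
    have hsm := succ_mod Λ r
    have hlt : r % L Λ < L Λ := Nat.mod_lt _ (by omega)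
    rw [decide_eq_decide]
    constructor
    · intro h; rw [hsm]; split <;> rename_i h2 <;> split at h <;> omega
    · intro h; rw [hsm] at h; split at h <;> rename_i h2 <;> split <;> omega

lemma conf_zero_agree {X : ℕ} (hX : X ∈ Λ.T) :
    (Lam' Λ).conf u 0 X = Λ.conf u 0 X := by
  rw [conf0]
  simp only [BNL.conf, term', if_pos hX]

lemma pchain {X : ℕ} (hX : X ∈ Λ.T) :
    ∀ (j : ℕ), j ≤ L Λ - 1 → ∀ r, (Lam' Λ).conf u (r + j) (pV Λ X j) = (Lam' Λ).conf u r X := by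
  intro j
  induction j with
  | zero => intro _ r; simp [pV]
  | succ j ih =>
    intro hj r
    have hL := hL2 Λ
    have hp : pV Λ X (j + 1) = P0 Λ + L Λ * X + (j + 1) := by rw [pV, if_neg (by omega)]
    have : r + (j + 1) = (r + j) + 1 := by omega
    rw [this, confS, hp, dec_p Λ hX (by omega) (by omega)]
    show (Lam' Λ).conf u (r + j) (pV Λ X (j + 1 - 1)) = _
    simp only [Nat.add_sub_cancel]
    exact ih (by omega) r

lemma offphase {X : ℕ} (hX : X ∈ Λ.T) (r : ℕ) (hr : ¬ (r + 1) % L Λ = 0) :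
    (Lam' Λ).conf u (r + 1) X = false := by
  have hL := hL2 Λ
  rw [confS, dec_T Λ hX]
  have hc : (Lam' Λ).conf u r (cV Λ (L Λ - 1)) = false := by
    rw [clock Λ u r (by omega)]
    have hsm := succ_mod Λ r
    have hlt : r % L Λ < L Λ := Nat.mod_lt _ (by omega)
    simp only [decide_eq_false_iff_not]
    intro h
    rw [hsm, if_pos (by omega)] at hr
    exact hr rfl
  show (_ && (Lam' Λ).conf u r (cV Λ (L Λ - 1))) = false
  rw [hc, Bool.and_false]

lemma gate_eval {t X : ℕ} (hX : X ∈ Λ.T)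
    (IH : ∀ Y ∈ Λ.T, (Lam' Λ).conf u (L Λ * t) Y = Λ.conf u t Y) :
    ∀ (φ : BForm) (k δ : ℕ), 1 ≤ k → k < 2 ^ (δ + 1) → φ.vars ⊆ Λ.T →
      δ + φ.depth ≤ Λ.depth →
      (∀ p ∈ gcl Λ X k δ φ, p ∈ gcl Λ X 1 0 (Λ.iter X)) →
      (Lam' Λ).conf u (L Λ * t + (L Λ - 1 - δ)) (ref Λ X δ k φ) = φ.eval (Λ.conf u t) := by
  have hL := hL2 Λ
  have hLd : L Λ = Λ.depth + 2 := rfl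
  intro φ
  induction φ with
  | tru => intro _ _ _ _ _ _ _; exact tt_true Λ u _
  | var Y =>
    intro k δ hk1 hk2 hv hδ hsub
    have hY : Y ∈ Λ.T := hv (by simp [BForm.vars])
    show (Lam' Λ).conf u (L Λ * t + (L Λ - 1 - δ)) (pV Λ Y (L Λ - 1 - δ)) = _
    rw [pchain Λ u hY (L Λ - 1 - δ) (by omega) (L Λ * t), IH Y hY]
    rfl
  | not φ ihφ =>
    intro k δ hk1 hk2 hv hδ hsub
    have hd1 : 1 ≤ φ.depth + 1 := by omega
    have hδ1 : δ + 1 + φ.depth ≤ Λ.depth := by simp only [BForm.depth] at hδ; omega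
    have hkW : k < W Λ := lt_of_lt_of_le hk2 (Nat.pow_le_pow_right (by norm_num) (by omega))
    have harith : L Λ * t + (L Λ - 1 - δ) = (L Λ * t + (L Λ - 1 - (δ + 1))) + 1 := by omega
    show (Lam' Λ).conf u _ (gV Λ X k) = _
    rw [harith, confS, dec_g Λ hX hk1 hkW,
      lookup_eq_some (gcl_keys Λ X (Λ.iter X) 1 0 le_rfl).1
        (hsub _ (List.mem_cons_self)), Option.getD_some]
    simp only [BForm.eval]
    rw [ihφ (2 * k) (δ + 1) (by omega) (by rw [pow_succ]; omega)
      (by simpa [BForm.vars] using hv) hδ1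
      (fun q hq => hsub _ (List.mem_cons_of_mem _ hq))]
  | and φ ψ ihφ ihψ =>
    intro k δ hk1 hk2 hv hδ hsub
    have hvφ : φ.vars ⊆ Λ.T := fun x hx => hv (by simp [BForm.vars]; exact Or.inl hx)
    have hvψ : ψ.vars ⊆ Λ.T := fun x hx => hv (by simp [BForm.vars]; exact Or.inr hx)
    have hδφ : δ + 1 + φ.depth ≤ Λ.depth := by simp only [BForm.depth] at hδ; omega
    have hδψ : δ + 1 + ψ.depth ≤ Λ.depth := by simp only [BForm.depth] at hδ; omega
    have hkW : k < W Λ := lt_of_lt_of_le hk2 (Nat.pow_le_pow_right (by norm_num) (by omega))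
    have harith : L Λ * t + (L Λ - 1 - δ) = (L Λ * t + (L Λ - 1 - (δ + 1))) + 1 := by
      simp only [BForm.depth] at hδ; omega
    show (Lam' Λ).conf u _ (gV Λ X k) = _
    rw [harith, confS, dec_g Λ hX hk1 hkW,
      lookup_eq_some (gcl_keys Λ X (Λ.iter X) 1 0 le_rfl).1
        (hsub _ (List.mem_cons_self)), Option.getD_some]
    show ((Lam' Λ).conf u (L Λ * t + (L Λ - 1 - (δ + 1))) (ref Λ X (δ + 1) (2 * k) φ) &&
      (Lam' Λ).conf u (L Λ * t + (L Λ - 1 - (δ + 1))) (ref Λ X (δ + 1) (2 * k + 1) ψ)) = _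
    rw [ihφ (2 * k) (δ + 1) (by omega) (by rw [pow_succ]; omega) hvφ hδφ
        (fun q hq => hsub _ (List.mem_cons_of_mem _ (List.mem_append_left _ hq))),
      ihψ (2 * k + 1) (δ + 1) (by omega) (by rw [pow_succ]; omega) hvψ hδψ
        (fun q hq => hsub _ (List.mem_cons_of_mem _ (List.mem_append_right _ hq)))]
    rfl

lemma main_conf : ∀ t, ∀ X ∈ Λ.T, (Lam' Λ).conf u (L Λ * t) X = Λ.conf u t X := by
  intro t
  induction t with
  | zero => intro X hX; simpa using conf_zero_agree Λ u hX
  | succ t ih =>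
    intro X hX
    have hL := hL2 Λ
    have harith : L Λ * (t + 1) = (L Λ * t + (L Λ - 1)) + 1 := by rw [Nat.mul_succ]; omega
    have hgate := gate_eval Λ u hX ih (Λ.iter X) 1 0 le_rfl (by norm_num) (Λ.hiter X hX)
      (by simpa using depth_le Λ hX) (fun q hq => hq)
    simp only [Nat.sub_zero] at hgate
    rw [harith, confS, dec_T Λ hX]
    show ((Lam' Λ).conf u (L Λ * t + (L Λ - 1)) (ref Λ X 0 1 (Λ.iter X)) &&
      (Lam' Λ).conf u (L Λ * t + (L Λ - 1)) (cV Λ (L Λ - 1))) = _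
    rw [hgate, clock Λ u _ (by omega)]
    have hmod : (L Λ * t + (L Λ - 1)) % L Λ = L Λ - 1 := by
      rw [Nat.mul_add_mod]; exact Nat.mod_eq_of_lt (by omega)
    rw [hmod]
    simp [BNL.conf]

end Dyn

section Equiv
variable (Λ : BNL) (u : ℕ → Bool)

lemma offphase' {X : ℕ} (hX : X ∈ Λ.T) {r : ℕ} (hr : ¬ L Λ ∣ r) :
    (Lam' Λ).conf u r X = false := by
  cases r with
  | zero => exact absurd (dvd_zero _) hr
  | succ r =>
    refine offphase Λ u hX r fun h => hr ?_
    exact Nat.dvd_of_mod_eq_zero h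

lemma attn_iff (r : ℕ) : (Lam' Λ).attn u r ↔ (L Λ ∣ r ∧ Λ.attn u (r / L Λ)) := by
  have hL := hL2 Λ
  have h1 : (Lam' Λ).attn u r ↔ ∃ X ∈ Λ.At, (Lam' Λ).conf u r X = true := Iff.rfl
  have h2 : ∀ t, Λ.attn u t ↔ ∃ X ∈ Λ.At, Λ.conf u t X = true := fun _ => Iff.rfl
  rw [h1]
  constructor
  · rintro ⟨X, hXA, hconf⟩
    have hXT : X ∈ Λ.T := Λ.hAt hXA
    by_cases hdvd : L Λ ∣ r
    · refine ⟨hdvd, (h2 _).2 ⟨X, hXA, ?_⟩⟩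
      obtain ⟨t, rfl⟩ := hdvd
      rw [Nat.mul_div_cancel_left _ (by omega : 0 < L Λ), ← main_conf Λ u t X hXT]
      exact hconf
    · rw [offphase' Λ u hXT hdvd] at hconf; cases hconf
  · rintro ⟨hdvd, hat⟩
    obtain ⟨X, hXA, hconf⟩ := (h2 _).1 hat
    obtain ⟨t, rfl⟩ := hdvd
    rw [Nat.mul_div_cancel_left _ (by omega : 0 < L Λ)] at hconf
    exact ⟨X, hXA, by rw [main_conf Λ u t X (Λ.hAt hXA)]; exact hconf⟩

lemma out_eq {r : ℕ} (hdvd : L Λ ∣ r) : (Lam' Λ).out u r = Λ.out u (r / L Λ) := by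
  show (Λ.Pr.sort (· ≤ ·)).map ((Lam' Λ).conf u r) = (Λ.Pr.sort (· ≤ ·)).map (Λ.conf u (r / L Λ))
  refine List.map_congr_left fun X hX => ?_
  have hXT : X ∈ Λ.T := Λ.hPr ((Finset.mem_sort _).1 hX)
  conv_lhs => rw [← Nat.mul_div_cancel' hdvd]
  exact main_conf Λ u (r / L Λ) X hXT

lemma equiv_delay (D : ℕ) (hD : L Λ ≤ D) : EquivWithDelay (Lam' Λ).toM Λ.toM D := by
  refine ⟨rfl, rfl, fun u => ?_⟩
  have hL := hL2 Λ
  have hL0 : 0 < L Λ := by omega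
  refine ⟨⟨⟨fun r => ⟨r.1 / L Λ, ((attn_iff Λ u r.1).1 r.2).2⟩,
    fun t => ⟨L Λ * t.1, (attn_iff Λ u _).2 ⟨⟨t.1, rfl⟩, by
      rw [Nat.mul_div_cancel_left _ hL0]; exact t.2⟩⟩,
    fun r => Subtype.ext (Nat.mul_div_cancel' ((attn_iff Λ u r.1).1 r.2).1),
    fun t => Subtype.ext (Nat.mul_div_cancel_left _ hL0)⟩, ?_⟩, ?_, ?_⟩
  · intro a b
    simp only [Equiv.coe_fn_mk, Subtype.mk_le_mk]
    constructor
    · intro h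
      have ha := Nat.mul_div_cancel' ((attn_iff Λ u a.1).1 a.2).1
      have hb := Nat.mul_div_cancel' ((attn_iff Λ u b.1).1 b.2).1
      have := Nat.mul_le_mul_left (L Λ) h
      rw [ha, hb] at this
      exact this
    · intro h
      exact Nat.div_le_div_right h
  · intro r
    exact out_eq Λ u ((attn_iff Λ u r.1).1 r.2).1
  · intro r
    refine ⟨Nat.div_le_self _ _, ?_⟩
    have ha := Nat.mul_div_cancel' ((attn_iff Λ u r.1).1 r.2).1
    calc r.1 = L Λ * (r.1 / L Λ) := ha.symm
    _ ≤ D * (r.1 / L Λ) := Nat.mul_le_mul_right _ hD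

end Equiv

section Size
variable (Λ : BNL)

lemma card_T' : (T' Λ).card ≤
    Λ.T.card + 1 + L Λ + Λ.T.card * (L Λ - 1) + ∑ X ∈ Λ.T, (Λ.iter X).size := by
  have h1 := Finset.card_union_le
    (Λ.T ∪ {ttV Λ} ∪ (Finset.range (L Λ)).image (cV Λ)
      ∪ (Λ.T ×ˢ Finset.Ico 1 (L Λ)).image (fun p => P0 Λ + L Λ * p.1 + p.2))
    (Λ.T.biUnion (fun X => ((gcl Λ X 1 0 (Λ.iter X)).map Prod.fst).toFinset.image (gV Λ X)))
  have h2 := Finset.card_union_le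
    (Λ.T ∪ {ttV Λ} ∪ (Finset.range (L Λ)).image (cV Λ))
    ((Λ.T ×ˢ Finset.Ico 1 (L Λ)).image (fun p => P0 Λ + L Λ * p.1 + p.2))
  have h3 := Finset.card_union_le (Λ.T ∪ {ttV Λ}) ((Finset.range (L Λ)).image (cV Λ))
  have h4 := Finset.card_union_le Λ.T ({ttV Λ} : Finset ℕ)
  have h5 : ((Finset.range (L Λ)).image (cV Λ)).card ≤ L Λ :=
    le_trans (Finset.card_image_le) (by simp)
  have h6 : ((Λ.T ×ˢ Finset.Ico 1 (L Λ)).image (fun p => P0 Λ + L Λ * p.1 + p.2)).card ≤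
      Λ.T.card * (L Λ - 1) := by
    refine le_trans (Finset.card_image_le) ?_
    rw [Finset.card_product, Nat.card_Ico]
  have h7 : (Λ.T.biUnion (fun X =>
      ((gcl Λ X 1 0 (Λ.iter X)).map Prod.fst).toFinset.image (gV Λ X))).card ≤
      ∑ X ∈ Λ.T, (Λ.iter X).size := by
    refine le_trans (Finset.card_biUnion_le) (Finset.sum_le_sum fun X _ => ?_)
    refine le_trans (Finset.card_image_le) (le_trans (List.toFinset_card_le _) ?_)
    rw [List.length_map]
    exact gcl_len Λ X (Λ.iter X) 1 0
  have h8 : ({ttV Λ} : Finset ℕ).card = 1 := Finset.card_singleton _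
  unfold T'
  omega

lemma size_Lam' : (Lam' Λ).size ≤ 4 * (T' Λ).card := by
  have h1 : ((T' Λ) \ Λ.I).card ≤ (T' Λ).card :=
    Finset.card_le_card (Finset.sdiff_subset)
  have h2 : ∑ n ∈ T' Λ, (iter' Λ n).size ≤ (T' Λ).card * 3 := by
    have := Finset.sum_le_card_nsmul (T' Λ) (fun n => (iter' Λ n).size) 3
      (fun x hx => (iter_props Λ hx).1)
    simpa [smul_eq_mul] using this
  show ((T' Λ) \ Λ.I).card + ∑ n ∈ T' Λ, (iter' Λ n).size ≤ _
  omega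

lemma size_bound (hne : Λ.T.Nonempty) :
    (Lam' Λ).size ≤ 24 * Λ.size * (Λ.depth + 1) := by
  have hcardsum : Λ.T.card ≤ ∑ X ∈ Λ.T, (Λ.iter X).size := by
    have := Finset.card_nsmul_le_sum Λ.T (fun X => (Λ.iter X).size) 1
      (fun x _ => bsize_pos _)
    simpa using this
  have hsum : ∑ X ∈ Λ.T, (Λ.iter X).size ≤ Λ.size := by
    show _ ≤ (Λ.T \ Λ.I).card + _
    omega
  have hTcard : Λ.T.card ≤ Λ.size := le_trans hcardsum hsum
  have hs1 : 1 ≤ Λ.size := le_trans (Finset.card_pos.2 hne) hTcard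
  have hL : L Λ = Λ.depth + 2 := rfl
  have h1 := size_Lam' Λ
  have h2 := card_T' Λ
  set s := Λ.size
  set d := Λ.depth
  have e1 : s * 1 ≤ s * (d + 1) := Nat.mul_le_mul_left _ (by omega)
  have e2 : 1 * (d + 1) ≤ s * (d + 1) := Nat.mul_le_mul_right _ hs1
  have e3 : Λ.T.card * (L Λ - 1) ≤ s * (d + 1) :=
    Nat.mul_le_mul hTcard (by omega)
  have hgoal : 24 * s * (d + 1) = 24 * (s * (d + 1)) := by ring
  rw [hgoal]
  omega

end Size
end BNLfo

/-- Every BNL-program of size `s` and depth `d` has an asynchronously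
equivalent fully-open BNL-program over a superset of its schema variables, of size at most
`C·s·(d+1)` and computation delay at most `C·(d+1)`. -/
theorem bnl_to_fully_open :
    ∃ C : ℕ, ∀ Λ : BNL, ∃ Λ' : BNL,
      Λ.T ⊆ Λ'.T ∧ Λ'.FullyOpen ∧
      Λ'.size ≤ C * Λ.size * (Λ.depth + 1) ∧
      EquivWithDelay Λ'.toM Λ.toM (C * (Λ.depth + 1)) := by
  refine ⟨24, fun Λ => ?_⟩
  by_cases hT : Λ.T = ∅
  · refine ⟨Λ, subset_rfl, ?_, ?_, ?_⟩
    · intro X hX; rw [hT] at hX; cases hX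
    · have hs : Λ.size = 0 := by simp [BNL.size, hT]
      omega
    · refine ⟨rfl, rfl, fun u => ⟨OrderIso.refl _, fun t => rfl, fun t => ?_⟩⟩
      have h2 : ∃ X ∈ Λ.At, Λ.conf u t.1 X = true := t.2
      obtain ⟨X, hXA, _⟩ := h2
      have hXT := Λ.hAt hXA
      rw [hT] at hXT
      cases hXT
  · have hne : Λ.T.Nonempty := Finset.nonempty_iff_ne_empty.2 hT
    refine ⟨BNLfo.Lam' Λ, BNLfo.T_sub_T' Λ, BNLfo.Lam'_fullyOpen Λ,
      BNLfo.size_bound Λ hne, ?_⟩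
    refine BNLfo.equiv_delay Λ (24 * (Λ.depth + 1)) ?_
    show Λ.depth + 2 ≤ _
    omega
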